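/- arXiv:1605.03051 — 3 statements merged into one kernel-verified Lean document; each statement's English description precedes it below -/
import Mathlib

section
/- Let X and Y be topological spaces and let A be a closed subset of X. Suppose T1 : X → P(Y) and T2 : X → P(Y) are lower semicontinuous set-valued maps such that T2(x) ⊆ T1(x) for all x ∈ A. Then the set-valued map T : X → P(Y) defined by T(x) = T1(x) if x ∉ A and T(x) = T2(x) if x ∈ A is lower semicontinuous. -/
/-- A set-valued map `T : X → Set Y` is lower semicontinuous. -/
def LscMap {X Y : Type*} [TopologicalSpace X] [TopologicalSpace Y] (T : X → Set Y) : Prop :=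
  ∀ x : X, ∀ V : Set Y, IsOpen V → (T x ∩ V).Nonempty →
    ∃ U : Set X, IsOpen U ∧ x ∈ U ∧ ∀ y ∈ U, (T y ∩ V).Nonempty

open Classical in
theorem stmt_0 {X Y : Type*} [TopologicalSpace X] [TopologicalSpace Y]
    (A : Set X) (hA : IsClosed A)
    (T₁ T₂ : X → Set Y) (hT₁ : LscMap T₁) (hT₂ : LscMap T₂)
    (hsub : ∀ x ∈ A, T₂ x ⊆ T₁ x) :
    LscMap (fun x => if x ∈ A then T₂ x else T₁ x) := by
  intro x V hV hne
  by_cases hx : x ∈ A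
  · simp only [hx, if_pos] at hne
    obtain ⟨U₂, hU₂o, hxU₂, h₂⟩ := hT₂ x V hV hne
    have hne₁ : (T₁ x ∩ V).Nonempty := hne.mono (Set.inter_subset_inter_left V (hsub x hx))
    obtain ⟨U₁, hU₁o, hxU₁, h₁⟩ := hT₁ x V hV hne₁
    refine ⟨U₁ ∩ U₂, hU₁o.inter hU₂o, ⟨hxU₁, hxU₂⟩, ?_⟩
    intro y ⟨hy₁, hy₂⟩
    by_cases hyA : y ∈ A
    · simpa [hyA] using h₂ y hy₂
    · simpa [hyA] using h₁ y hy₁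
  · simp only [hx, if_neg, not_false_iff] at hne
    obtain ⟨U₁, hU₁o, hxU₁, h₁⟩ := hT₁ x V hV hne
    refine ⟨U₁ ∩ Aᶜ, hU₁o.inter hA.isOpen_compl, ⟨hxU₁, hx⟩, ?_⟩
    intro y ⟨hy₁, hyA⟩
    simpa [(Set.mem_compl_iff A y).mp hyA] using h₁ y hy₁
end

section
/- Let E and F be topological vector spaces, H ⊆ E and T ⊆ F subsets of the Zima type. Then the product H × T ⊆ E × F is of the Zima type. -/
open Pointwise

/-- A subset `K` of a topological vector space is of the Zima type. -/
def ZimaType {E : Type*} [AddCommGroup E] [Module ℝ E] [TopologicalSpace E]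
    (K : Set E) : Prop :=
  ∀ U ∈ nhds (0 : E), ∃ V ∈ nhds (0 : E), convexHull ℝ (V ∩ (K - K)) ⊆ U

theorem stmt_8 {E F : Type*}
    [AddCommGroup E] [Module ℝ E] [TopologicalSpace E] [IsTopologicalAddGroup E] [ContinuousSMul ℝ E]
    [AddCommGroup F] [Module ℝ F] [TopologicalSpace F] [IsTopologicalAddGroup F] [ContinuousSMul ℝ F]
    (H : Set E) (T : Set F) (hH : ZimaType H) (hT : ZimaType T) :
    ZimaType (H ×ˢ T) := by
  intro U hU
  rw [nhds_prod_eq, Filter.mem_prod_iff] at hU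
  obtain ⟨U1, hU1, U2, hU2, hUsub⟩ := hU
  obtain ⟨V1, hV1, hV1sub⟩ := hH U1 hU1
  obtain ⟨V2, hV2, hV2sub⟩ := hT U2 hU2
  refine ⟨V1 ×ˢ V2, ?_, ?_⟩
  · rw [nhds_prod_eq]; exact Filter.prod_mem_prod hV1 hV2
  · have hdiff : (H ×ˢ T) - (H ×ˢ T) = (H - H) ×ˢ (T - T) := by
      ext ⟨x, y⟩
      simp only [Set.mem_sub, Set.mem_prod, Prod.exists, Prod.mk_sub_mk, Prod.mk.injEq]
      aesop
    rw [hdiff, Set.prod_inter_prod, convexHull_prod]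
    exact (Set.prod_mono hV1sub hV2sub).trans hUsub
end

section
/- Let X, Y, Z be topological spaces, A ⊆ X × Y, f : X × Y × X → P(Z) a set-valued map, C : X → P(Z) a map assigning to each x a set C(x) ⊆ Z, and define P(x,y) = {u ∈ X : f(x,y,u) ⊆ −int C(x)}. Assume: for each u ∈ X the map (x,y) ↦ f(x,y,u) is upper semicontinuous on A, and the map Q : X → P(Z), Q(x) = Z ∖ (−C(x)), is upper semicontinuous on the projection of A to X, with each C(x) a closed set. Then for each closed set V ⊆ X, the set {(x,y) ∈ A : P(x,y) ⊆ V} is closed in A; equivalently, P restricted to A is lower semicontinuous. -/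
private lemma my_interior_neg {Z : Type*} [TopologicalSpace Z] [AddCommGroup Z]
    [IsTopologicalAddGroup Z] (s : Set Z) : interior (-s) = -interior s := by
  have h : (-s : Set Z) = (Homeomorph.neg Z) ⁻¹' s := rfl
  rw [h, ← (Homeomorph.neg Z).preimage_interior]
  rfl

private lemma my_isClosed_neg {Z : Type*} [TopologicalSpace Z] [AddCommGroup Z]
    [IsTopologicalAddGroup Z] {s : Set Z} (hs : IsClosed s) : IsClosed (-s) := by
  have h : (-s : Set Z) = (Homeomorph.neg Z) ⁻¹' s := rfl
  rw [h]
  exact hs.preimage (Homeomorph.neg Z).continuous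

theorem stmt_17 {X Y Z : Type*} [TopologicalSpace X] [TopologicalSpace Y]
    [TopologicalSpace Z] [AddCommGroup Z] [IsTopologicalAddGroup Z]
    (A : Set (X × Y)) (f : X → Y → X → Set Z) (C : X → Set Z)
    (P : X × Y → Set X)
    (hP : ∀ p : X × Y, P p = {u : X | f p.1 p.2 u ⊆ -interior (C p.1)})
    (hCclosed : ∀ x : X, IsClosed (C x))
    -- for each u, (x,y) ↦ f x y u is upper semicontinuous on A
    (husc : ∀ u : X, ∀ p ∈ A, ∀ V : Set Z, IsOpen V → f p.1 p.2 u ⊆ V →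
      ∃ U ∈ nhds p, ∀ q ∈ U ∩ A, f q.1 q.2 u ⊆ V)
    -- Q(x) = Z \ (−C(x)) is upper semicontinuous on pr_X A
    (hQusc : ∀ x ∈ Prod.fst '' A, ∀ V : Set Z, IsOpen V → (-(C x))ᶜ ⊆ V →
      ∃ U ∈ nhds x, ∀ x' ∈ U ∩ Prod.fst '' A, (-(C x'))ᶜ ⊆ V) :
    ∀ V : Set X, IsClosed V →
      ∃ W : Set (X × Y), IsClosed W ∧ {p ∈ A | P p ⊆ V} = W ∩ A := by
  intro V _hV
  set B : Set (X × Y) := {p ∈ A | ¬ P p ⊆ V} with hBdef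
  have key : ∀ p ∈ B, ∃ U : Set (X × Y), IsOpen U ∧ p ∈ U ∧ U ∩ A ⊆ B := by
    rintro p ⟨hpA, hpV⟩
    obtain ⟨u, huP, huV⟩ := Set.not_subset.mp hpV
    rw [hP] at huP
    have hopen1 : IsOpen (-interior (C p.1)) := by
      rw [← my_interior_neg]; exact isOpen_interior
    obtain ⟨U₁, hU₁n, hU₁⟩ := husc u p hpA _ hopen1 huP
    have hQopen : IsOpen ((-(C p.1))ᶜ) := (my_isClosed_neg (hCclosed p.1)).isOpen_compl
    obtain ⟨U₂, hU₂n, hU₂⟩ := hQusc p.1 ⟨p, hpA, rfl⟩ _ hQopen subset_rfl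
    refine ⟨interior U₁ ∩ Prod.fst ⁻¹' (interior U₂), ?_, ?_, ?_⟩
    · exact isOpen_interior.inter (isOpen_interior.preimage continuous_fst)
    · exact ⟨mem_interior_iff_mem_nhds.mpr hU₁n, mem_interior_iff_mem_nhds.mpr hU₂n⟩
    · rintro q ⟨⟨hq1, hq2⟩, hqA⟩
      refine ⟨hqA, ?_⟩
      rw [Set.not_subset]
      refine ⟨u, ?_, huV⟩
      rw [hP]
      have hf : f q.1 q.2 u ⊆ -interior (C p.1) := hU₁ q ⟨interior_subset hq1, hqA⟩
      have hsub : -(C p.1) ⊆ -(C q.1) :=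
        Set.compl_subset_compl.mp (hU₂ q.1 ⟨interior_subset hq2, ⟨q, hqA, rfl⟩⟩)
      calc f q.1 q.2 u ⊆ -interior (C p.1) := hf
        _ = interior (-(C p.1)) := (my_interior_neg _).symm
        _ ⊆ interior (-(C q.1)) := interior_mono hsub
        _ = -interior (C q.1) := my_interior_neg _
  classical
  set O : Set (X × Y) := ⋃₀ {U | IsOpen U ∧ U ∩ A ⊆ B} with hOdef
  have hOopen : IsOpen O := isOpen_sUnion fun U hU => hU.1
  refine ⟨Oᶜ, hOopen.isClosed_compl, ?_⟩
  ext p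
  simp only [Set.mem_setOf_eq, Set.mem_inter_iff, Set.mem_compl_iff]
  constructor
  · rintro ⟨hpA, hpV⟩
    refine ⟨?_, hpA⟩
    rintro ⟨U, ⟨_hUo, hUB⟩, hpU⟩
    exact (hUB ⟨hpU, hpA⟩).2 hpV
  · rintro ⟨hpO, hpA⟩
    refine ⟨hpA, ?_⟩
    by_contra hpV
    obtain ⟨U, hUo, hpU, hUB⟩ := key p ⟨hpA, hpV⟩
    exact hpO ⟨U, ⟨hUo, hUB⟩, hpU⟩
end
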